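/- Let K be an algebraically closed field of characteristic 0, m ≥ 0 an integer, u ≥ 1, k ≥ 5, and let s_1 ≥ s_2 ≥ … ≥ s_u ≥ 1 be integers with δ := Σ_{i=1}^{u} s_i. Then for every pair of integers ℓ ≥ k and a ≥ 2·(⌈2u/k⌉+1)·s_1, there exist pairwise distinct homogeneous forms h_1, …, h_u ∈ K[t_0,t_1] of degree m and pairwise distinct scalars τ_{i,t} ∈ K (1 ≤ i ≤ u, 1 ≤ t ≤ s_i) such that the linear map V_{ℓ,a} → K^{3δ}, sending f to the collection over all (i,t) of the three values of P_f, ∂P_f/∂t and ∂P_f/∂u at the point (τ_{i,t}, h_i(τ_{i,t},1)), is surjective. (Geometrically: h^1(F_m, I_{S^{(1)}}(ℓ,a)) = 0, where S^{(1)} is the first-order thickening in F_m of the set S of the δ chosen points; i.e., being singular at the δ points of S imposes 3δ independent conditions on |O_{F_m}(ℓ,a)|.) -/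

import Mathlib

open MvPolynomial

noncomputable section

/-- The space `V_{k,a}`: tuples `(f_0,…,f_k)` of binary forms, with `f_i`
homogeneous of degree `i*m+a`, and `f_i = 0` whenever `i*m+a < 0`. -/
def Vsub (K : Type) [Field K] (m k : ℕ) (a : ℤ) :
    Submodule K (Fin (k + 1) → MvPolynomial (Fin 2) K) :=
  ⨅ i : Fin (k + 1),
    ((homogeneousSubmodule (Fin 2) K (((i : ℕ) : ℤ) * (m : ℤ) + a).toNat ⊓
        (if (((i : ℕ) : ℤ) * (m : ℤ) + a) < 0 then
          (⊥ : Submodule K (MvPolynomial (Fin 2) K)) else ⊤)).comap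
      (LinearMap.proj i))

/-- Evaluation of `f ∈ V_{k,a}` at a point `(p,q)` of `F_m`:
`Σ f_i(p) · q_0^i · q_1^(k-i)`, as a linear functional. -/
def ptEval (K : Type) [Field K] (k : ℕ) (x : (Fin 2 → K) × (Fin 2 → K)) :
    (Fin (k + 1) → MvPolynomial (Fin 2) K) →ₗ[K] K :=
  ∑ i : Fin (k + 1),
    (x.2 0 ^ (i : ℕ) * x.2 1 ^ (k - (i : ℕ))) •
      ((aeval x.1 : MvPolynomial (Fin 2) K →ₐ[K] K).toLinearMap.comp (LinearMap.proj i))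

/-- The restriction `g_{f,h} := Σ f_i · h^(k-i)` of `F_f` to the section given by `h`. -/
def gRes (K : Type) [Field K] (k : ℕ) (h : MvPolynomial (Fin 2) K)
    (f : Fin (k + 1) → MvPolynomial (Fin 2) K) : MvPolynomial (Fin 2) K :=
  ∑ i : Fin (k + 1), f i * h ^ (k - (i : ℕ))

/-- `gRes` as a linear map in `f`. -/
def gResL (K : Type) [Field K] (k : ℕ) (h : MvPolynomial (Fin 2) K) :
    (Fin (k + 1) → MvPolynomial (Fin 2) K) →ₗ[K] MvPolynomial (Fin 2) K :=
  ∑ i : Fin (k + 1),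
    (LinearMap.mulLeft K (h ^ (k - (i : ℕ)))).comp (LinearMap.proj i)

/-- Evaluation of `g_{f,h}` at a parameter `p`, as a linear functional in `f`. -/
def gEval (K : Type) [Field K] (k : ℕ) (h : MvPolynomial (Fin 2) K) (p : Fin 2 → K) :
    (Fin (k + 1) → MvPolynomial (Fin 2) K) →ₗ[K] K :=
  ∑ i : Fin (k + 1),
    (eval p h ^ (k - (i : ℕ))) •
      ((aeval p : MvPolynomial (Fin 2) K →ₐ[K] K).toLinearMap.comp (LinearMap.proj i))

/-- `F_f := Σ f_i(t_0,t_1) · u_0^i · u_1^(k-i) ∈ K[t_0,t_1,u_0,u_1]`. -/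
def Fpoly (K : Type) [Field K] (k : ℕ) (f : Fin (k + 1) → MvPolynomial (Fin 2) K) :
    MvPolynomial (Fin 4) K :=
  ∑ i : Fin (k + 1),
    rename (Fin.castLE (by norm_num)) (f i) * X 2 ^ (i : ℕ) * X 3 ^ (k - (i : ℕ))

/-- The chart polynomial `P_f(t,u) := Σ f_j(t,1) · u^(k-j)`, in variables `t = X 0`, `u = X 1`. -/
def chartPoly (K : Type) [Field K] (k : ℕ) (f : Fin (k + 1) → MvPolynomial (Fin 2) K) :
    MvPolynomial (Fin 2) K :=
  ∑ j : Fin (k + 1), aeval ![X 0, 1] (f j) * X 1 ^ (k - (j : ℕ))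

/-- `chartPoly` as a linear map in `f`. -/
def chartPolyL (K : Type) [Field K] (k : ℕ) :
    (Fin (k + 1) → MvPolynomial (Fin 2) K) →ₗ[K] MvPolynomial (Fin 2) K :=
  ∑ j : Fin (k + 1),
    (LinearMap.mulLeft K ((X 1 : MvPolynomial (Fin 2) K) ^ (k - (j : ℕ)))).comp
      (((aeval ![X 0, 1] : MvPolynomial (Fin 2) K →ₐ[K] MvPolynomial (Fin 2) K)).toLinearMap.comp
        (LinearMap.proj j))

end

open MvPolynomial

/-- First-order evaluation data: value, d/dt, d/du. -/
noncomputable def deriv1 (K : Type) [Field K] (d : Fin 3) :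
    MvPolynomial (Fin 2) K →ₗ[K] MvPolynomial (Fin 2) K :=
  if d = 0 then LinearMap.id
  else if d = 1 then (pderiv (0 : Fin 2) : Derivation K (MvPolynomial (Fin 2) K) (MvPolynomial (Fin 2) K)).toLinearMap
  else (pderiv (1 : Fin 2) : Derivation K (MvPolynomial (Fin 2) K) (MvPolynomial (Fin 2) K)).toLinearMap


noncomputable section Config
variable {K : Type} [Field K]

def fibN {u : ℕ} {s : Fin u → ℕ} (n s₁ : ℕ) (p : (i : Fin u) × Fin (s i)) : ℕ :=
  ((p.1 : ℕ) / n) * s₁ + (p.2 : ℕ)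

lemma fibN_inj {u : ℕ} {s : Fin u → ℕ} {n s₁ : ℕ} (hs : ∀ i, s i ≤ s₁)
    {p q : (i : Fin u) × Fin (s i)} (h : fibN n s₁ p = fibN n s₁ q) :
    (p.1 : ℕ) / n = (q.1 : ℕ) / n ∧ (p.2 : ℕ) = (q.2 : ℕ) := by
  have hp2 : (p.2 : ℕ) < s₁ := lt_of_lt_of_le p.2.isLt (hs p.1)
  have hq2 : (q.2 : ℕ) < s₁ := lt_of_lt_of_le q.2.isLt (hs q.1)
  unfold fibN at h
  have h' : (p.2 : ℕ) + ((p.1 : ℕ) / n) * s₁ = (q.2 : ℕ) + ((q.1 : ℕ) / n) * s₁ := by omega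
  have e1 := congrArg (fun x => x % s₁) h'
  simp only [Nat.add_mul_mod_self_right] at e1
  rw [Nat.mod_eq_of_lt hp2, Nat.mod_eq_of_lt hq2] at e1
  have ht : (p.2 : ℕ) = (q.2 : ℕ) := e1
  refine ⟨?_, ht⟩
  have h2 : ((p.1 : ℕ) / n) * s₁ = ((q.1 : ℕ) / n) * s₁ := by
    generalize hA : ((p.1 : ℕ) / n) * s₁ = A at h ⊢
    generalize hB : ((q.1 : ℕ) / n) * s₁ = B at h ⊢
    omega
  exact Nat.eq_of_mul_eq_mul_right (by omega) h2

lemma sigmaPtEq {u : ℕ} {s : Fin u → ℕ} {p q : (i : Fin u) × Fin (s i)}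
    (h1 : p.1 = q.1) (h2 : (p.2 : ℕ) = (q.2 : ℕ)) : p = q := by
  obtain ⟨i, t⟩ := p; obtain ⟨j, r⟩ := q
  dsimp at h1 h2
  subst h1
  rw [Fin.ext h2]

end Config

noncomputable section S12aux
variable {K : Type} [Field K]

lemma evalRH_polyAeval {σ : Type*} (φ : MvPolynomial σ K →+* K) (w : MvPolynomial σ K)
    (hφ : ∀ c : K, φ (MvPolynomial.C c) = c) (A : Polynomial K) :
    φ (Polynomial.aeval w A) = Polynomial.eval (φ w) A := by
  induction A using Polynomial.induction_on' with
  | add p q hp hq => simp [map_add, hp, hq]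
  | monomial n c =>
      simp [Polynomial.aeval_monomial, Polynomial.eval_monomial, map_mul, map_pow,
        MvPolynomial.algebraMap_eq, hφ]

lemma pderiv_polyAeval_same (j : Fin 2) (A : Polynomial K) :
    pderiv j (Polynomial.aeval (X j : MvPolynomial (Fin 2) K) A)
      = Polynomial.aeval (X j) (Polynomial.derivative A) := by
  induction A using Polynomial.induction_on' with
  | add p q hp hq => simp [map_add, hp, hq]
  | monomial n c =>
      cases n with
      | zero => simp [Polynomial.aeval_monomial]
      | succ n =>
          simp [Polynomial.aeval_monomial, Polynomial.derivative_monomial, pderiv_pow,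
            MvPolynomial.algebraMap_eq, pderiv_C_mul]
          ring

lemma pderiv_polyAeval_ne (i j : Fin 2) (h : j ≠ i) (A : Polynomial K) :
    pderiv i (Polynomial.aeval (X j : MvPolynomial (Fin 2) K) A) = 0 := by
  induction A using Polynomial.induction_on' with
  | add p q hp hq => simp [map_add, hp, hq]
  | monomial n c =>
      simp [Polynomial.aeval_monomial, MvPolynomial.algebraMap_eq, pderiv_C_mul, pderiv_pow,
        pderiv_X_of_ne h]

lemma hermiteDual (S : Finset K) (x : K) (hx : x ∈ S) :
    ∃ A0 A1 : Polynomial K,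
      A0.natDegree ≤ 2 * S.card - 1 ∧ A1.natDegree ≤ 2 * S.card - 1 ∧
      A0.eval x = 1 ∧ (Polynomial.derivative A0).eval x = 0 ∧
      A1.eval x = 0 ∧ (Polynomial.derivative A1).eval x = 1 ∧
      ∀ y ∈ S, y ≠ x →
        A0.eval y = 0 ∧ (Polynomial.derivative A0).eval y = 0 ∧
        A1.eval y = 0 ∧ (Polynomial.derivative A1).eval y = 0 := by
  classical
  set M : Polynomial K := ∏ y ∈ S.erase x, (Polynomial.X - Polynomial.C y) with hM
  have hMx : M.eval x ≠ 0 := by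
    rw [hM, Polynomial.eval_prod]
    refine Finset.prod_ne_zero_iff.2 fun y hy => ?_
    have : y ≠ x := (Finset.mem_erase.1 hy).1
    simpa [sub_ne_zero] using (this.symm)
  set L : Polynomial K := M ^ 2 with hL
  have hLx : L.eval x ≠ 0 := by simp [hL, pow_ne_zero, hMx]
  have hLy : ∀ y ∈ S, y ≠ x → L.eval y = 0 := by
    intro y hy hyx
    have : M.eval y = 0 := by
      rw [hM, Polynomial.eval_prod]
      exact Finset.prod_eq_zero (Finset.mem_erase.2 ⟨hyx, hy⟩) (by simp)
    simp [hL, this]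
  have hL'y : ∀ y ∈ S, y ≠ x → (Polynomial.derivative L).eval y = 0 := by
    intro y hy hyx
    have hMy : M.eval y = 0 := by
      rw [hM, Polynomial.eval_prod]
      exact Finset.prod_eq_zero (Finset.mem_erase.2 ⟨hyx, hy⟩) (by simp)
    rw [hL, Polynomial.derivative_pow]
    simp [hMy]
  have hdegM : M.natDegree ≤ S.card - 1 := by
    have h1 : M.natDegree ≤ ∑ y ∈ S.erase x, (Polynomial.X - Polynomial.C y).natDegree :=
      Polynomial.natDegree_prod_le _ _
    have h2 : ∑ y ∈ S.erase x, (Polynomial.X - Polynomial.C y).natDegree = S.card - 1 := by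
      simp [Polynomial.natDegree_X_sub_C, Finset.card_erase_of_mem hx]
    omega
  have hdegL : L.natDegree ≤ 2 * S.card - 2 := by
    have : L.natDegree ≤ 2 * M.natDegree := by
      simpa [hL, two_mul] using Polynomial.natDegree_pow_le (p := M) (n := 2)
    have hc : 1 ≤ S.card := Finset.card_pos.2 ⟨x, hx⟩
    omega
  refine ⟨Polynomial.C (L.eval x)⁻¹ * (L *
      (1 - Polynomial.C ((L.eval x)⁻¹ * (Polynomial.derivative L).eval x) *
        (Polynomial.X - Polynomial.C x))),
    Polynomial.C (L.eval x)⁻¹ * (L * (Polynomial.X - Polynomial.C x)), ?_, ?_, ?_, ?_, ?_, ?_, ?_⟩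
  · refine le_trans (Polynomial.natDegree_mul_le) ?_
    simp only [Polynomial.natDegree_C, zero_add]
    refine le_trans (Polynomial.natDegree_mul_le) ?_
    have h1 : (1 - Polynomial.C ((L.eval x)⁻¹ * (Polynomial.derivative L).eval x) *
        (Polynomial.X - Polynomial.C x)).natDegree ≤ 1 := by
      refine le_trans (Polynomial.natDegree_sub_le _ _) ?_
      simp only [Polynomial.natDegree_one, max_le_iff]
      constructor
      · omega
      · refine le_trans (Polynomial.natDegree_mul_le) ?_
        simp only [Polynomial.natDegree_C, Polynomial.natDegree_X_sub_C]
        omega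
    have hc : 1 ≤ S.card := Finset.card_pos.2 ⟨x, hx⟩
    omega
  · refine le_trans (Polynomial.natDegree_mul_le) ?_
    simp only [Polynomial.natDegree_C, zero_add]
    refine le_trans (Polynomial.natDegree_mul_le) ?_
    have hc : 1 ≤ S.card := Finset.card_pos.2 ⟨x, hx⟩
    simp only [Polynomial.natDegree_X_sub_C]
    omega
  · simp [hLx]
  · simp only [Polynomial.derivative_mul, Polynomial.derivative_C, Polynomial.derivative_one,
      Polynomial.derivative_sub, Polynomial.derivative_X, Polynomial.eval_add, Polynomial.eval_mul,
      Polynomial.eval_C, Polynomial.eval_sub, Polynomial.eval_X, Polynomial.eval_one,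
      Polynomial.eval_zero]
    field_simp
    ring
  · simp
  · simp only [Polynomial.derivative_mul, Polynomial.derivative_C, Polynomial.eval_add,
      Polynomial.eval_mul, Polynomial.eval_C, Polynomial.eval_sub, Polynomial.eval_X,
      Polynomial.derivative_sub, Polynomial.derivative_X, Polynomial.derivative_one,
      Polynomial.eval_one, Polynomial.eval_zero]
    field_simp
    ring
  · intro y hy hyx
    have h0 := hLy y hy hyx
    have h1 := hL'y y hy hyx
    refine ⟨?_, ?_, ?_, ?_⟩ <;>
      simp [Polynomial.derivative_mul, h0, h1]

/-- value / d-dt / d-du selector on the two univariate factors -/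
def Dt (d : Fin 3) (A : Polynomial K) : Polynomial K := if d = 1 then A.derivative else A
def Du (d : Fin 3) (B : Polynomial K) : Polynomial K := if d = 2 then B.derivative else B

lemma aevalK_polyAeval (pt : Fin 2 → K) (j : Fin 2) (A : Polynomial K) :
    aeval pt (Polynomial.aeval (X j : MvPolynomial (Fin 2) K) A) = A.eval (pt j) := by
  rw [← Polynomial.aeval_algHom_apply (aeval pt) (X j) A, aeval_X]
  exact congrFun (Polynomial.coe_aeval_eq_eval (pt j)) A

@[simp] lemma Dt_zero (A : Polynomial K) : Dt 0 A = A := by simp [Dt]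
@[simp] lemma Dt_one (A : Polynomial K) : Dt 1 A = A.derivative := by simp [Dt]
@[simp] lemma Dt_two (A : Polynomial K) : Dt 2 A = A := by simp [Dt]
@[simp] lemma Du_zero (B : Polynomial K) : Du 0 B = B := by simp [Du]
@[simp] lemma Du_one (B : Polynomial K) : Du 1 B = B := by simp [Du]
@[simp] lemma Du_two (B : Polynomial K) : Du 2 B = B.derivative := by simp [Du]

lemma jet_prod (d : Fin 3) (A B : Polynomial K) (x y : K) :
    aeval ![x, y] (deriv1 K d (Polynomial.aeval (X 0) A * Polynomial.aeval (X 1) B))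
      = (Dt d A).eval x * (Du d B).eval y := by
  have h0 : (![x, y] : Fin 2 → K) 0 = x := rfl
  have h1 : (![x, y] : Fin 2 → K) 1 = y := rfl
  have hd1 : pderiv (0 : Fin 2) (Polynomial.aeval (X 0) A * Polynomial.aeval (X 1) B)
      = Polynomial.aeval (X 0 : MvPolynomial (Fin 2) K) A.derivative * Polynomial.aeval (X 1) B := by
    rw [pderiv_mul, pderiv_polyAeval_same, pderiv_polyAeval_ne 0 1 (by decide)]
    ring
  have hd2 : pderiv (1 : Fin 2) (Polynomial.aeval (X 0) A * Polynomial.aeval (X 1) B)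
      = Polynomial.aeval (X 0 : MvPolynomial (Fin 2) K) A * Polynomial.aeval (X 1) B.derivative := by
    rw [pderiv_mul, pderiv_polyAeval_same, pderiv_polyAeval_ne 1 0 (by decide)]
    ring
  fin_cases d
  · show aeval ![x, y] (deriv1 K 0 _) = (Dt 0 A).eval x * (Du 0 B).eval y
    rw [show deriv1 K 0 = LinearMap.id from if_pos rfl]
    simp only [LinearMap.id_coe, id_eq, Dt_zero, Du_zero]
    rw [map_mul, aevalK_polyAeval, aevalK_polyAeval, h0, h1]
  · show aeval ![x, y] (deriv1 K 1 _) = (Dt 1 A).eval x * (Du 1 B).eval y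
    rw [show deriv1 K 1 = ((pderiv (0 : Fin 2) : Derivation K (MvPolynomial (Fin 2) K) _).toLinearMap) by
      rw [deriv1, if_neg (by decide), if_pos rfl]]
    show aeval ![x, y] (pderiv (0 : Fin 2) _) = _
    rw [hd1]
    simp only [Dt_one, Du_one]
    rw [map_mul, aevalK_polyAeval, aevalK_polyAeval, h0, h1]
  · show aeval ![x, y] (deriv1 K 2 _) = (Dt 2 A).eval x * (Du 2 B).eval y
    rw [show deriv1 K 2 = ((pderiv (1 : Fin 2) : Derivation K (MvPolynomial (Fin 2) K) _).toLinearMap) by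
      rw [deriv1, if_neg (by decide), if_neg (by decide)]]
    show aeval ![x, y] (pderiv (1 : Fin 2) _) = _
    rw [hd2]
    simp only [Dt_two, Du_two]
    rw [map_mul, aevalK_polyAeval, aevalK_polyAeval, h0, h1]

/-- homogenization of a univariate polynomial to bidegree `d` in `t₀,t₁`. -/
def hom2 (d : ℕ) (A : Polynomial K) : MvPolynomial (Fin 2) K :=
  ∑ α ∈ Finset.range (d + 1), MvPolynomial.C (A.coeff α) * X 0 ^ α * X 1 ^ (d - α)

lemma hom2_isHomogeneous (d : ℕ) (A : Polynomial K) : (hom2 d A).IsHomogeneous d := by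
  refine IsHomogeneous.sum _ _ _ fun α hα => ?_
  have hα' : α ≤ d := by
    have := Finset.mem_range.1 hα; omega
  have h1 : (MvPolynomial.C (A.coeff α) * X 0 ^ α * (X 1 : MvPolynomial (Fin 2) K) ^ (d - α)).IsHomogeneous
      (0 + 1 * α + 1 * (d - α)) :=
    (((isHomogeneous_C _ _).mul ((isHomogeneous_X _ _).pow α)).mul
      ((isHomogeneous_X _ _).pow (d - α)))
  convert h1 using 1
  omega

lemma aeval_hom2 (d : ℕ) (A : Polynomial K) (h : A.natDegree ≤ d) :
    aeval ![X 0, (1 : MvPolynomial (Fin 2) K)] (hom2 d A) = Polynomial.aeval (X 0) A := by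
  rw [hom2, map_sum, Polynomial.aeval_eq_sum_range' (Nat.lt_succ_of_le h)]
  refine Finset.sum_congr rfl fun α hα => ?_
  simp [algebraMap_eq, Algebra.smul_def]

lemma sum_fin_C_mul_pow (ℓ : ℕ) (B : Polynomial K) (hB : B.natDegree ≤ ℓ) :
    ∑ j : Fin (ℓ + 1), MvPolynomial.C (B.coeff (ℓ - (j : ℕ))) * (X 1 : MvPolynomial (Fin 2) K) ^ (ℓ - (j : ℕ))
      = Polynomial.aeval (X 1) B := by
  rw [Polynomial.aeval_eq_sum_range' (Nat.lt_succ_of_le hB)]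
  rw [Fin.sum_univ_eq_sum_range (fun j => MvPolynomial.C (B.coeff (ℓ - j)) * (X 1 : MvPolynomial (Fin 2) K) ^ (ℓ - j))]
  have := Finset.sum_range_reflect (fun i => MvPolynomial.C (B.coeff i) * (X 1 : MvPolynomial (Fin 2) K) ^ i) (ℓ + 1)
  simp only [Nat.add_sub_cancel] at this
  rw [this]
  refine Finset.sum_congr rfl fun i _ => ?_
  rw [Algebra.smul_def, algebraMap_eq]

lemma chartPolyL_preim (m ℓ a : ℕ) (A B : Polynomial K) (hA : A.natDegree ≤ a) (hB : B.natDegree ≤ ℓ) :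
    chartPolyL K ℓ (fun j : Fin (ℓ + 1) =>
        hom2 ((j : ℕ) * m + a) (Polynomial.C (B.coeff (ℓ - (j : ℕ))) * A))
      = Polynomial.aeval (X 0) A * Polynomial.aeval (X 1) B := by
  rw [chartPolyL, LinearMap.sum_apply]
  have hstep : ∀ j : Fin (ℓ + 1),
      ((LinearMap.mulLeft K ((X 1 : MvPolynomial (Fin 2) K) ^ (ℓ - (j : ℕ)))).comp
        (((aeval ![X 0, 1] : MvPolynomial (Fin 2) K →ₐ[K] MvPolynomial (Fin 2) K)).toLinearMap.comp
          (LinearMap.proj j)))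
        (fun j : Fin (ℓ + 1) => hom2 ((j : ℕ) * m + a) (Polynomial.C (B.coeff (ℓ - (j : ℕ))) * A))
      = (MvPolynomial.C (B.coeff (ℓ - (j : ℕ))) * (X 1 : MvPolynomial (Fin 2) K) ^ (ℓ - (j : ℕ))) *
          Polynomial.aeval (X 0) A := by
    intro j
    have hdeg : (Polynomial.C (B.coeff (ℓ - (j : ℕ))) * A).natDegree ≤ (j : ℕ) * m + a := by
      refine le_trans (Polynomial.natDegree_mul_le) ?_
      simp only [Polynomial.natDegree_C, zero_add]
      omega
    simp only [LinearMap.comp_apply, LinearMap.proj_apply, AlgHom.toLinearMap_apply,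
      LinearMap.mulLeft_apply]
    rw [aeval_hom2 _ _ hdeg, map_mul, Polynomial.aeval_C, algebraMap_eq]
    ring
  rw [Finset.sum_congr rfl fun j _ => hstep j, ← Finset.sum_mul]
  rw [sum_fin_C_mul_pow ℓ B hB]
  ring

lemma preim_mem (m ℓ a : ℕ) (A B : Polynomial K) (hA : A.natDegree ≤ a) :
    (fun j : Fin (ℓ + 1) =>
        hom2 ((j : ℕ) * m + a) (Polynomial.C (B.coeff (ℓ - (j : ℕ))) * A))
      ∈ Vsub K m ℓ (a : ℤ) := by
  rw [Vsub, Submodule.mem_iInf]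
  intro i
  rw [Submodule.mem_comap]
  have hnn : ¬ ((((i : ℕ) : ℤ) * (m : ℤ) + (a : ℕ)) < 0) := by push_neg; positivity
  rw [if_neg hnn]
  refine Submodule.mem_inf.2 ⟨?_, trivial⟩
  rw [mem_homogeneousSubmodule]
  have hcast : ((((i : ℕ) : ℤ) * (m : ℤ) + ((a : ℕ) : ℤ))).toNat = (i : ℕ) * m + a := by
    rw [show (((i : ℕ) : ℤ) * (m : ℤ) + ((a : ℕ) : ℤ)) = (((i : ℕ) * m + a : ℕ) : ℤ) by push_cast; ring,
      Int.toNat_natCast]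
  rw [hcast]
  exact hom2_isHomogeneous _ _

end S12aux

noncomputable section Engine
open MvPolynomial
variable {K : Type} [Field K]

lemma engine [CharZero K] (m u : ℕ) (s : Fin u → ℕ) (ℓ a : ℕ)
    (Ac Bc : ((i : Fin u) × Fin (s i)) × Fin 3 → Polynomial K)
    (hAdeg : ∀ c, (Ac c).natDegree ≤ a) (hBdeg : ∀ c, (Bc c).natDegree ≤ ℓ)
    (T0 : ((i : Fin u) × Fin (s i)) → K) (C0 : Fin u → K)
    (hkron : ∀ r c : ((i : Fin u) × Fin (s i)) × Fin 3,
      (Dt r.2 (Ac c)).eval (T0 r.1) * (Du r.2 (Bc c)).eval (C0 r.1.1)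
        = if r = c then 1 else 0) :
    ∃ (τ : ((i : Fin u) × Fin (s i)) → K) (cc : Fin u → K),
      Function.Injective τ ∧ Function.Injective cc ∧
      Function.Surjective (LinearMap.pi fun idx : ((i : Fin u) × Fin (s i)) × Fin 3 =>
        ((aeval ![τ idx.1, cc idx.1.1] : MvPolynomial (Fin 2) K →ₐ[K] K).toLinearMap.comp
          ((deriv1 K idx.2).comp ((chartPolyL K ℓ).comp (Vsub K m ℓ (a : ℤ)).subtype)))) := by
  classical
  set Mat : Matrix (((i : Fin u) × Fin (s i)) × Fin 3) (((i : Fin u) × Fin (s i)) × Fin 3)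
      (MvPolynomial (((i : Fin u) × Fin (s i)) ⊕ Fin u) K) := fun r c =>
    Polynomial.aeval (X (Sum.inl r.1) : MvPolynomial (((i : Fin u) × Fin (s i)) ⊕ Fin u) K)
        (Dt r.2 (Ac c)) *
      Polynomial.aeval (X (Sum.inr r.1.1) : MvPolynomial (((i : Fin u) × Fin (s i)) ⊕ Fin u) K)
        (Du r.2 (Bc c)) with hMat
  have hMatEval : ∀ (θ : ((i : Fin u) × Fin (s i)) ⊕ Fin u → K) r c,
      eval θ (Mat r c)
        = (Dt r.2 (Ac c)).eval (θ (Sum.inl r.1)) * (Du r.2 (Bc c)).eval (θ (Sum.inr r.1.1)) := by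
    intro θ r c
    rw [hMat]
    rw [map_mul, evalRH_polyAeval _ _ (fun c => eval_C c),
      evalRH_polyAeval _ _ (fun c => eval_C c), eval_X, eval_X]
  set θ0 : ((i : Fin u) × Fin (s i)) ⊕ Fin u → K := Sum.elim T0 C0 with hθ0
  have hdet0 : eval θ0 Mat.det = 1 := by
    rw [RingHom.map_det]
    have h1 : (eval θ0).mapMatrix Mat = 1 := by
      ext r c
      rw [RingHom.mapMatrix_apply]
      show eval θ0 (Mat r c) = _
      rw [hMatEval, hθ0]
      simp only [Sum.elim_inl, Sum.elim_inr]
      rw [hkron r c, Matrix.one_apply]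
    rw [h1, Matrix.det_one]
  have hdM : Mat.det ≠ 0 := fun h => by simp [h] at hdet0
  set P1 := ∏ e ∈ (Finset.univ : Finset (((i : Fin u) × Fin (s i)) × ((i : Fin u) × Fin (s i)))).filter
      (fun e => e.1 ≠ e.2),
      (X (Sum.inl e.1) - X (Sum.inl e.2) : MvPolynomial (((i : Fin u) × Fin (s i)) ⊕ Fin u) K) with hP1
  set P2 := ∏ e ∈ (Finset.univ : Finset (Fin u × Fin u)).filter (fun e => e.1 ≠ e.2),
      (X (Sum.inr e.1) - X (Sum.inr e.2) : MvPolynomial (((i : Fin u) × Fin (s i)) ⊕ Fin u) K) with hP2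
  have hP1ne : P1 ≠ 0 := by
    rw [hP1]
    refine Finset.prod_ne_zero_iff.2 fun e he => ?_
    have h2 : (Sum.inl e.1 : ((i : Fin u) × Fin (s i)) ⊕ Fin u) ≠ Sum.inl e.2 := by
      simp only [ne_eq, Sum.inl.injEq]
      exact (Finset.mem_filter.1 he).2
    exact sub_ne_zero.2 (fun hc => h2 (X_injective hc))
  have hP2ne : P2 ≠ 0 := by
    rw [hP2]
    refine Finset.prod_ne_zero_iff.2 fun e he => ?_
    have h2 : (Sum.inr e.1 : ((i : Fin u) × Fin (s i)) ⊕ Fin u) ≠ Sum.inr e.2 := by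
      simp only [ne_eq, Sum.inr.injEq]
      exact (Finset.mem_filter.1 he).2
    exact sub_ne_zero.2 (fun hc => h2 (X_injective hc))
  have hbig : Mat.det * (P1 * P2) ≠ 0 := mul_ne_zero hdM (mul_ne_zero hP1ne hP2ne)
  have hex : ∃ θ : ((i : Fin u) × Fin (s i)) ⊕ Fin u → K, eval θ (Mat.det * (P1 * P2)) ≠ 0 := by
    by_contra hc
    push_neg at hc
    exact hbig (MvPolynomial.funext fun θ => by rw [hc θ, map_zero])
  obtain ⟨θs, hθs⟩ := hex
  rw [map_mul, map_mul] at hθs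
  have hdets : eval θs Mat.det ≠ 0 := fun h => hθs (by rw [h, zero_mul])
  have hP1s : eval θs P1 ≠ 0 := fun h => hθs (by rw [h, zero_mul, mul_zero])
  have hP2s : eval θs P2 ≠ 0 := fun h => hθs (by rw [h, mul_zero, mul_zero])
  refine ⟨fun p => θs (Sum.inl p), fun i => θs (Sum.inr i), ?_, ?_, ?_⟩
  · intro p q hpq
    by_contra hne
    rw [hP1, map_prod] at hP1s
    exact (Finset.prod_ne_zero_iff.1 hP1s (p, q)
      (Finset.mem_filter.2 ⟨Finset.mem_univ _, hne⟩)) (by simp [hpq])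
  · intro i j hij
    by_contra hne
    rw [hP2, map_prod] at hP2s
    exact (Finset.prod_ne_zero_iff.1 hP2s (i, j)
      (Finset.mem_filter.2 ⟨Finset.mem_univ _, hne⟩)) (by simp [hij])
  · set N : Matrix (((i : Fin u) × Fin (s i)) × Fin 3) (((i : Fin u) × Fin (s i)) × Fin 3) K :=
      fun r c => eval θs (Mat r c) with hN
    have hNdet : IsUnit N.det := by
      have h1 : N = (eval θs).mapMatrix Mat := by ext r c; rfl
      rw [h1, ← RingHom.map_det]
      exact isUnit_iff_ne_zero.2 hdets
    intro y
    set z := N⁻¹.mulVec y with hz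
    refine ⟨∑ c, z c • (⟨fun j : Fin (ℓ + 1) =>
        hom2 ((j : ℕ) * m + a) (Polynomial.C ((Bc c).coeff (ℓ - (j : ℕ))) * (Ac c)),
      preim_mem m ℓ a (Ac c) (Bc c) (hAdeg c)⟩ : Vsub K m ℓ (a : ℤ)), ?_⟩
    funext r
    rw [LinearMap.pi_apply, map_sum]
    have hterm : ∀ c, ((aeval ![θs (Sum.inl r.1), θs (Sum.inr r.1.1)] :
            MvPolynomial (Fin 2) K →ₐ[K] K).toLinearMap.comp
          ((deriv1 K r.2).comp ((chartPolyL K ℓ).comp (Vsub K m ℓ (a : ℤ)).subtype)))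
          (z c • (⟨fun j : Fin (ℓ + 1) =>
              hom2 ((j : ℕ) * m + a) (Polynomial.C ((Bc c).coeff (ℓ - (j : ℕ))) * (Ac c)),
            preim_mem m ℓ a (Ac c) (Bc c) (hAdeg c)⟩ : Vsub K m ℓ (a : ℤ)))
        = N r c * z c := by
      intro c
      rw [map_smul]
      simp only [LinearMap.comp_apply, Submodule.coe_subtype, AlgHom.toLinearMap_apply]
      rw [chartPolyL_preim m ℓ a (Ac c) (Bc c) (hAdeg c) (hBdeg c), jet_prod, smul_eq_mul]
      rw [hN]
      show _ = eval θs (Mat r c) * z c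
      rw [hMatEval]
      ring
    rw [Finset.sum_congr rfl fun c _ => hterm c]
    have hmv : ∑ c, N r c * z c = (N.mulVec z) r := by
      simp [Matrix.mulVec, dotProduct]
    rw [hmv, hz, Matrix.mulVec_mulVec, Matrix.mul_nonsing_inv _ hNdet, Matrix.one_mulVec]

end Engine

/-- Lemma 5.5 of the paper: being singular at the δ = Σ s_i chosen points
(s_i points on each of u general sections) imposes 3δ independent conditions on
|O(ℓ,a)|, i.e. h^1(I_(S^(1))(ℓ,a)) = 0.  Index i : Fin u plays the role of the paper's
index i+1, so s ⟨0,_⟩ is the paper's s_1. -/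
theorem statement12 (K : Type) [Field K] [IsAlgClosed K] [CharZero K]
    (m u : ℕ) (hu : 0 < u) (k : ℕ) (hk : 5 ≤ k)
    (s : Fin u → ℕ)
    (hmono : ∀ i j : Fin u, i ≤ j → s j ≤ s i)
    (hpos : ∀ i, 1 ≤ s i)
    (ℓ a : ℕ) (hℓ : k ≤ ℓ)
    (ha : 2 * ((2 * u + k - 1) / k + 1) * s ⟨0, hu⟩ ≤ a) :
    ∃ (h : Fin u → MvPolynomial (Fin 2) K) (τ : (i : Fin u) → Fin (s i) → K),
      (∀ i, (h i).IsHomogeneous m) ∧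
      (∀ i j, i ≠ j → h i ≠ h j) ∧
      (∀ (i : Fin u) (t : Fin (s i)) (j : Fin u) (r : Fin (s j)),
        (⟨i, t⟩ : (i : Fin u) × Fin (s i)) ≠ ⟨j, r⟩ → τ i t ≠ τ j r) ∧
      Function.Surjective
        (LinearMap.pi fun idx : ((i : Fin u) × Fin (s i)) × Fin 3 =>
          ((aeval ![τ idx.1.1 idx.1.2, eval ![τ idx.1.1 idx.1.2, 1] (h idx.1.1)] :
              MvPolynomial (Fin 2) K →ₐ[K] K).toLinearMap.comp
            ((deriv1 K idx.2).comp
              ((chartPolyL K ℓ).comp (Vsub K m ℓ (a : ℤ)).subtype)))) := by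
  classical
  have hs₁pos : 1 ≤ s ⟨0, hu⟩ := hpos _
  set s₁ := s ⟨0, hu⟩ with hs₁def
  have hsle : ∀ i : Fin u, s i ≤ s₁ := fun i => hmono ⟨0, hu⟩ i (by simp [Fin.le_def])
  set n := (k + 1) / 2 with hndef
  have hn0 : 0 < n := by omega
  set q := (2 * u + k - 1) / k with hqdef
  have hkq : 2 * u ≤ k * q := by
    have hdm := Nat.div_add_mod (2 * u + k - 1) k
    have hmod : (2 * u + k - 1) % k < k := Nat.mod_lt _ (by omega)
    rw [← hqdef] at hdm
    generalize hKQ : k * q = KQ at hdm ⊢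
    omega
  have hnq : u ≤ n * q := by
    have h1 : k * q ≤ 2 * n * q := Nat.mul_le_mul_right q (by omega)
    have h2 : 2 * n * q = 2 * (n * q) := by ring
    generalize hKQ : k * q = KQ at *
    generalize hNQ : n * q = NQ at *
    omega
  have hdivq : (u - 1) / n ≤ q := Nat.div_le_of_le_mul (by omega)
  set F := ((u - 1) / n + 1) * s₁ with hFdef
  have h2F : 2 * F ≤ a := by
    have h1 : ((u - 1) / n + 1) * s₁ ≤ (q + 1) * s₁ := Nat.mul_le_mul_right s₁ (by omega)
    calc 2 * F = 2 * (((u - 1) / n + 1) * s₁) := by rw [hFdef]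
    _ ≤ 2 * ((q + 1) * s₁) := Nat.mul_le_mul_left 2 h1
    _ = 2 * (q + 1) * s₁ := by ring
    _ ≤ a := ha
  have hF1 : 0 < F := by
    rw [hFdef]; exact Nat.mul_pos (Nat.succ_pos _) (by omega)
  have hfibF : ∀ p : (i : Fin u) × Fin (s i), fibN n s₁ p < F := by
    intro p
    have hdiv : (p.1 : ℕ) / n ≤ (u - 1) / n :=
      Nat.div_le_div_right (by have := p.1.isLt; omega)
    have ht : (p.2 : ℕ) < s₁ := lt_of_lt_of_le p.2.isLt (hsle p.1)
    have h1 : ((p.1 : ℕ) / n) * s₁ ≤ ((u - 1) / n) * s₁ := Nat.mul_le_mul_right s₁ hdiv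
    rw [hFdef]
    unfold fibN
    rw [add_mul, one_mul]
    generalize hA : ((p.1 : ℕ) / n) * s₁ = A at h1 ⊢
    generalize hB : ((u - 1) / n) * s₁ = B at h1 ⊢
    omega
  set TSet : Finset K :=
    Finset.image (fun p : (i : Fin u) × Fin (s i) => ((fibN n s₁ p : ℕ) : K)) Finset.univ
    with hTSet
  have hTcard : TSet.card ≤ F := by
    have hsub : TSet ⊆ Finset.image (fun j : Fin F => ((j : ℕ) : K)) Finset.univ := by
      intro x hx
      rw [hTSet] at hx
      obtain ⟨p, -, rfl⟩ := Finset.mem_image.1 hx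
      exact Finset.mem_image.2 ⟨⟨fibN n s₁ p, hfibF p⟩, Finset.mem_univ _, rfl⟩
    calc TSet.card ≤ _ := Finset.card_le_card hsub
    _ ≤ (Finset.univ : Finset (Fin F)).card := Finset.card_image_le
    _ = F := by simp
  have hTdeg : 2 * TSet.card - 1 ≤ a := by omega
  set USet : ((i : Fin u) × Fin (s i)) → Finset K := fun p' =>
    Finset.image (fun p : (i : Fin u) × Fin (s i) => ((p.1 : ℕ) : K))
      (Finset.univ.filter fun p => fibN n s₁ p = fibN n s₁ p') with hUSet
  have hUcard : ∀ p', (USet p').card ≤ n := by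
    intro p'
    have hsub : USet p' ⊆ Finset.image
        (fun j : Fin n => ((((p'.1 : ℕ) / n) * n + (j : ℕ) : ℕ) : K)) Finset.univ := by
      intro x hx
      rw [hUSet] at hx
      obtain ⟨p, hp, rfl⟩ := Finset.mem_image.1 hx
      have hfil : fibN n s₁ p = fibN n s₁ p' := (Finset.mem_filter.1 hp).2
      have hblk : (p.1 : ℕ) / n = (p'.1 : ℕ) / n := (fibN_inj hsle hfil).1
      refine Finset.mem_image.2 ⟨⟨(p.1 : ℕ) % n, Nat.mod_lt _ hn0⟩, Finset.mem_univ _, ?_⟩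
      have hnat : ((p'.1 : ℕ) / n) * n + (p.1 : ℕ) % n = (p.1 : ℕ) := by
        rw [← hblk, mul_comm]
        exact Nat.div_add_mod _ n
      exact congrArg (fun x : ℕ => ((x : ℕ) : K)) hnat
    calc (USet p').card ≤ _ := Finset.card_le_card hsub
    _ ≤ (Finset.univ : Finset (Fin n)).card := Finset.card_image_le
    _ = n := by simp
  have hUdeg : ∀ p', 2 * (USet p').card - 1 ≤ ℓ := by
    intro p'; have := hUcard p'; omega
  have hchA := fun p' : (i : Fin u) × Fin (s i) =>
    hermiteDual TSet ((fibN n s₁ p' : ℕ) : K)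
      (by rw [hTSet]; exact Finset.mem_image_of_mem _ (Finset.mem_univ p'))
  choose A0 A1 hA using hchA
  have hchB := fun p' : (i : Fin u) × Fin (s i) =>
    hermiteDual (USet p') ((p'.1 : ℕ) : K)
      (by
        rw [hUSet]
        exact Finset.mem_image.2
          ⟨p', Finset.mem_filter.2 ⟨Finset.mem_univ _, rfl⟩, rfl⟩)
  choose B0 B1 hB using hchB
  set Ac : (((i : Fin u) × Fin (s i)) × Fin 3) → Polynomial K :=
    fun c => if c.2 = 1 then A1 c.1 else A0 c.1 with hAc
  set Bc : (((i : Fin u) × Fin (s i)) × Fin 3) → Polynomial K :=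
    fun c => if c.2 = 2 then B1 c.1 else B0 c.1 with hBc
  have hAdeg : ∀ c, (Ac c).natDegree ≤ a := by
    intro c
    obtain ⟨h0, h1, -⟩ := hA c.1
    rw [hAc]; dsimp only
    split <;> omega
  have hBdeg : ∀ c, (Bc c).natDegree ≤ ℓ := by
    intro c
    obtain ⟨h0, h1, -⟩ := hB c.1
    have := hUdeg c.1
    rw [hBc]; dsimp only
    split <;> omega
  set T0 : ((i : Fin u) × Fin (s i)) → K := fun p => ((fibN n s₁ p : ℕ) : K) with hT0
  set C0 : Fin u → K := fun i => ((i : ℕ) : K) with hC0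
  have hkron : ∀ r c : ((i : Fin u) × Fin (s i)) × Fin 3,
      (Dt r.2 (Ac c)).eval (T0 r.1) * (Du r.2 (Bc c)).eval (C0 r.1.1)
        = if r = c then 1 else 0 := by
    rintro ⟨p, d⟩ ⟨p', d'⟩
    dsimp only
    by_cases hfib : fibN n s₁ p = fibN n s₁ p'
    · by_cases hp : p = p'
      · subst hp
        obtain ⟨-, -, hA0x, hA0dx, hA1x, hA1dx, -⟩ := hA p
        obtain ⟨-, -, hB0x, hB0dx, hB1x, hB1dx, -⟩ := hB p
        have hAfac : (Dt d (Ac (p, d'))).eval (T0 p)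
            = if ((d = 1) ↔ (d' = 1)) then 1 else 0 := by
          rw [hAc]; dsimp only
          by_cases h1 : d' = 1 <;> by_cases h2 : d = 1 <;>
            simp [Dt, h1, h2, hA0x, hA0dx, hA1x, hA1dx, hT0]
        have hBfac : (Du d (Bc (p, d'))).eval (C0 p.1)
            = if ((d = 2) ↔ (d' = 2)) then 1 else 0 := by
          rw [hBc]; dsimp only
          by_cases h1 : d' = 2 <;> by_cases h2 : d = 2 <;>
            simp [Du, h1, h2, hB0x, hB0dx, hB1x, hB1dx, hC0]
        rw [hAfac, hBfac]
        have hdd' : ∀ d d' : Fin 3,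
            (((d = 1) ↔ (d' = 1)) ∧ ((d = 2) ↔ (d' = 2))) ↔ d = d' := by decide
        have hdd := hdd' d d'
        by_cases hd : d = d'
        · subst hd
          rw [if_pos Iff.rfl, if_pos Iff.rfl, if_pos rfl, one_mul]
        · rw [if_neg (by simp [hd] : ¬((p, d) = (p, d')))]
          by_cases h1 : ((d = 1) ↔ (d' = 1))
          · have h2 : ¬((d = 2) ↔ (d' = 2)) := fun h2 => hd (hdd.1 ⟨h1, h2⟩)
            rw [if_pos h1, if_neg h2, mul_zero]
          · rw [if_neg h1, zero_mul]
      · have hsec : p.1 ≠ p'.1 := by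
          intro he
          exact hp (sigmaPtEq he (fibN_inj hsle hfib).2)
        obtain ⟨-, -, -, -, -, -, hBvan⟩ := hB p'
        have hmem : ((p.1 : ℕ) : K) ∈ USet p' := by
          rw [hUSet]
          exact Finset.mem_image.2 ⟨p, Finset.mem_filter.2 ⟨Finset.mem_univ _, hfib⟩, rfl⟩
        have hne : ((p.1 : ℕ) : K) ≠ (((p'.1 : ℕ)) : K) := by
          intro hc
          exact hsec (Fin.ext (Nat.cast_injective hc))
        obtain ⟨hb0, hb0d, hb1, hb1d⟩ := hBvan _ hmem hne
        have hBfac : (Du d (Bc (p', d'))).eval (C0 p.1) = 0 := by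
          rw [hBc]; dsimp only
          by_cases h1 : d' = 2 <;> by_cases h2 : d = 2 <;>
            simp [Du, h1, h2, hb0, hb0d, hb1, hb1d, hC0]
        rw [hBfac, mul_zero, if_neg (by simp [hp])]
    · have hpne : p ≠ p' := fun he => hfib (by rw [he])
      obtain ⟨-, -, -, -, -, -, hAvan⟩ := hA p'
      have hmem : ((fibN n s₁ p : ℕ) : K) ∈ TSet := by
        rw [hTSet]
        exact Finset.mem_image_of_mem _ (Finset.mem_univ p)
      have hne : ((fibN n s₁ p : ℕ) : K) ≠ ((fibN n s₁ p' : ℕ) : K) := by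
        intro hc; exact hfib (Nat.cast_injective hc)
      obtain ⟨ha0, ha0d, ha1, ha1d⟩ := hAvan _ hmem hne
      have hAfac : (Dt d (Ac (p', d'))).eval (T0 p) = 0 := by
        rw [hAc]; dsimp only
        by_cases h1 : d' = 1 <;> by_cases h2 : d = 1 <;>
          simp [Dt, h1, h2, ha0, ha0d, ha1, ha1d, hT0]
      rw [hAfac, zero_mul, if_neg (by simp [hpne])]
  obtain ⟨τ, cc, hτinj, hccinj, hsurj⟩ :=
    engine (K := K) m u s ℓ a Ac Bc hAdeg hBdeg T0 C0 hkron
  refine ⟨fun i => MvPolynomial.monomial (Finsupp.single 1 m) (cc i),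
    fun i t => τ ⟨i, t⟩, ?_, ?_, ?_, ?_⟩
  · intro i
    exact MvPolynomial.isHomogeneous_monomial _ (by
      rcases Nat.eq_zero_or_pos m with hm | hm
      · subst hm; simp [Finsupp.degree]
      · exact Finsupp.degree_single _ _)
  · intro i j hij hc
    apply hij
    apply hccinj
    have h2 := congrArg (MvPolynomial.coeff (Finsupp.single 1 m)) hc
    simpa [MvPolynomial.coeff_monomial] using h2
  · intro i t j r hne hc
    exact hne (hτinj hc)
  · have heval : ∀ (i : Fin u) (t : Fin (s i)),
        eval ![τ ⟨i, t⟩, 1]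
          (MvPolynomial.monomial (R := K) (Finsupp.single (1 : Fin 2) m) (cc i)) = cc i := by
      intro i t
      simp [MvPolynomial.eval_monomial]
    have hfuneq : (fun idx : ((i : Fin u) × Fin (s i)) × Fin 3 =>
          ((aeval ![τ ⟨idx.1.1, idx.1.2⟩, eval ![τ ⟨idx.1.1, idx.1.2⟩, 1]
              (MvPolynomial.monomial (R := K) (Finsupp.single (1 : Fin 2) m) (cc idx.1.1))] :
              MvPolynomial (Fin 2) K →ₐ[K] K).toLinearMap.comp
            ((deriv1 K idx.2).comp
              ((chartPolyL K ℓ).comp (Vsub K m ℓ (a : ℤ)).subtype))))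
        = (fun idx : ((i : Fin u) × Fin (s i)) × Fin 3 =>
          ((aeval ![τ idx.1, cc idx.1.1] :
              MvPolynomial (Fin 2) K →ₐ[K] K).toLinearMap.comp
            ((deriv1 K idx.2).comp
              ((chartPolyL K ℓ).comp (Vsub K m ℓ (a : ℤ)).subtype)))) := by
      funext idx
      rw [heval idx.1.1 idx.1.2, Sigma.eta]
    show Function.Surjective (LinearMap.pi _)
    rw [show (fun idx : ((i : Fin u) × Fin (s i)) × Fin 3 =>
          ((aeval ![τ ⟨idx.1.1, idx.1.2⟩, eval ![τ ⟨idx.1.1, idx.1.2⟩, 1]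
              (MvPolynomial.monomial (R := K) (Finsupp.single (1 : Fin 2) m) (cc idx.1.1))] :
              MvPolynomial (Fin 2) K →ₐ[K] K).toLinearMap.comp
            ((deriv1 K idx.2).comp
              ((chartPolyL K ℓ).comp (Vsub K m ℓ (a : ℤ)).subtype))))
      = _ from hfuneq]
    exact hsurj
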